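/- Let B be the 6-dimensional Lie algebra over k spanned by the classes of v₀t, v₁t, v₂t, v₀(t−1), v₁(t−1), v₂(t−1) in O/Ot(t−1), where O = v₀k[t] ⊕ v₁k[t] ⊕ v₂k[t] with k[t]-linear brackets [v₀,v₁] = −v₂(t−1), [v₁,v₂] = −v₀, [v₂,v₀] = v₁t. Then B is solvable (its second derived algebra vanishes) but not nilpotent (its lower central series stabilizes at a nonzero ideal). -/

import Mathlib

open Polynomial

lemma aux_dvd {k : Type*} [Field k] {r : k[X]} (h0 : r.eval 0 = 0) (h1 : r.eval 1 = 0) :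
    (X : k[X]) * (X - 1) ∣ r := by
  have hX : (X - C (0:k)) ∣ r := (dvd_iff_isRoot).2 h0
  have hX1 : (X - C (1:k)) ∣ r := (dvd_iff_isRoot).2 h1
  have hcop : IsCoprime (X - C (0:k)) (X - C (1:k)) := by
    refine ⟨1, -1, ?_⟩
    simp [C_0, C_1]
  have := hcop.mul_dvd hX hX1
  simpa [C_0, C_1] using this

lemma aux_decomp0 {k : Type*} [Field k] (p : k[X]) :
    ∃ q : k[X], p = X * (X - 1) * q + C (p.eval 0) + C (p.eval 1 - p.eval 0) * X := by
  obtain ⟨q, hq⟩ := aux_dvd (r := p - C (p.eval 0) - C (p.eval 1 - p.eval 0) * X)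
    (by simp) (by simp)
  exact ⟨q, by linear_combination hq⟩

lemma aux_decomp1 {k : Type*} [Field k] (p : k[X]) :
    ∃ q : k[X], p * X = X * (X - 1) * q + C (p.eval 1) * X := by
  obtain ⟨q, hq⟩ := aux_dvd (r := (p - C (p.eval 1)) * X) (by simp) (by simp)
  exact ⟨q, by linear_combination hq⟩

lemma aux_decomp2 {k : Type*} [Field k] (p : k[X]) :
    ∃ q : k[X], p * (X - 1) = X * (X - 1) * q + C (p.eval 0) * (X - 1) := by
  obtain ⟨q, hq⟩ := aux_dvd (r := (p - C (p.eval 0)) * (X - 1)) (by simp) (by simp)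
  exact ⟨q, by linear_combination hq⟩

/-- Let `O = v₀k[t] ⊕ v₁k[t] ⊕ v₂k[t]` be the realization of the Onsager algebra as the
free `k[t]`-module on `v₀, v₁, v₂` with `k[t]`-bilinear brackets `[v₀,v₁] = -v₂(t-1)`,
`[v₁,v₂] = -v₀`, `[v₂,v₀] = v₁t`, and let `I = O·t(t-1)` be the ideal of elements all of
whose coordinates are divisible by `t(t-1)`.  Then `B = O ⧸ I` (which is spanned by the
classes of `vᵢt, vᵢ(t-1)`) is solvable — its second derived algebra vanishes — but not
nilpotent: its lower central series stabilizes at the first step at a nonzero ideal. -/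
theorem stmt_18 {k : Type*} [Field k] [CharZero k]
    {O : Type*} [LieRing O] [LieAlgebra k O]
    [Module (Polynomial k) O] [IsScalarTower k (Polynomial k) O]
    (v : Fin 3 → O)
    (bas : Module.Basis (Fin 3) (Polynomial k) O) (hbas : ∀ i, bas i = v i)
    (hsmul : ∀ (p : Polynomial k) (x y : O), ⁅p • x, y⁆ = p • ⁅x, y⁆)
    (h01 : ⁅v 0, v 1⁆ = -(((X : Polynomial k) - 1) • v 2))
    (h12 : ⁅v 1, v 2⁆ = -v 0)
    (h20 : ⁅v 2, v 0⁆ = (X : Polynomial k) • v 1)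
    (I : LieIdeal k O)
    (hI : ∀ x : O, x ∈ I ↔ ∃ y : O, x = ((X : Polynomial k) * ((X : Polynomial k) - 1)) • y) :
    LieAlgebra.derivedSeries k (O ⧸ I) 2 = ⊥ ∧
    LieModule.lowerCentralSeries k (O ⧸ I) (O ⧸ I) 2 = LieModule.lowerCentralSeries k (O ⧸ I) (O ⧸ I) 1 ∧
    LieModule.lowerCentralSeries k (O ⧸ I) (O ⧸ I) 1 ≠ ⊥ ∧
    ¬ LieModule.IsNilpotent (O ⧸ I) (O ⧸ I) := by
  -- right-smul compatibility
  have hsmul' : ∀ (p : Polynomial k) (x y : O), ⁅x, p • y⁆ = p • ⁅x, y⁆ := by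
    intro p x y
    calc ⁅x, p • y⁆ = -⁅p • y, x⁆ := (lie_skew _ _).symm
    _ = -(p • ⁅y, x⁆) := by rw [hsmul]
    _ = p • (-⁅y, x⁆) := (smul_neg _ _).symm
    _ = p • ⁅x, y⁆ := by rw [lie_skew]
  have h10 : ⁅v 1, v 0⁆ = ((X : Polynomial k) - 1) • v 2 := by
    rw [← lie_skew, h01, neg_neg]
  have h21 : ⁅v 2, v 1⁆ = v 0 := by rw [← lie_skew, h12, neg_neg]
  have h02 : ⁅v 0, v 2⁆ = -((X : Polynomial k) • v 1) := by rw [← lie_skew, h20]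
  -- the submodule S
  set S : Submodule (Polynomial k) O :=
    Submodule.span (Polynomial k) {v 0, (X : Polynomial k) • v 1, ((X : Polynomial k) - 1) • v 2}
    with hS
  have mS0 : v 0 ∈ S := Submodule.subset_span (by simp)
  have mS1 : (X : Polynomial k) • v 1 ∈ S := Submodule.subset_span (by simp)
  have mS2 : ((X : Polynomial k) - 1) • v 2 ∈ S := Submodule.subset_span (by simp)
  have hvvS : ∀ i j : Fin 3, ⁅v i, v j⁆ ∈ S := by
    intro i j
    fin_cases i <;> fin_cases j
    · show ⁅v 0, v 0⁆ ∈ S; rw [lie_self]; exact S.zero_mem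
    · show ⁅v 0, v 1⁆ ∈ S; rw [h01]; exact S.neg_mem mS2
    · show ⁅v 0, v 2⁆ ∈ S; rw [h02]; exact S.neg_mem mS1
    · show ⁅v 1, v 0⁆ ∈ S; rw [h10]; exact mS2
    · show ⁅v 1, v 1⁆ ∈ S; rw [lie_self]; exact S.zero_mem
    · show ⁅v 1, v 2⁆ ∈ S; rw [h12]; exact S.neg_mem mS0
    · show ⁅v 2, v 0⁆ ∈ S; rw [h20]; exact mS1
    · show ⁅v 2, v 1⁆ ∈ S; rw [h21]; exact mS0
    · show ⁅v 2, v 2⁆ ∈ S; rw [lie_self]; exact S.zero_mem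
  -- every bracket lies in S
  have bracketS : ∀ x y : O, ⁅x, y⁆ ∈ S := by
    intro x y
    have hx := bas.sum_repr x
    have hy := bas.sum_repr y
    rw [Fin.sum_univ_three] at hx hy
    rw [← hx, ← hy]
    simp only [add_lie, lie_add, hsmul, hsmul', hbas]
    refine S.add_mem (S.add_mem ?_ ?_) ?_ <;>
    refine S.smul_mem _ (S.add_mem (S.add_mem ?_ ?_) ?_) <;>
    exact S.smul_mem _ (hvvS _ _)
  -- I is closed under polynomial scalar multiplication
  have Ismul : ∀ (p : Polynomial k) {x : O}, x ∈ I → p • x ∈ I := by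
    intro p x hx
    rw [hI] at hx ⊢
    obtain ⟨y, rfl⟩ := hx
    exact ⟨p • y, by rw [smul_smul, smul_smul, mul_comm]⟩
  -- brackets of two elements of S lie in I
  have genBrkt : ∀ a ∈ ({v 0, (X : Polynomial k) • v 1, ((X : Polynomial k) - 1) • v 2} : Set O),
      ∀ b ∈ ({v 0, (X : Polynomial k) • v 1, ((X : Polynomial k) - 1) • v 2} : Set O),
      ⁅a, b⁆ ∈ I := by
    rintro a (rfl | rfl | rfl) b (rfl | rfl | rfl)
    · rw [lie_self]; exact I.zero_mem
    · rw [hsmul', h01]; exact (hI _).2 ⟨-(v 2), by module⟩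
    · rw [hsmul', h02]; exact (hI _).2 ⟨-(v 1), by module⟩
    · rw [hsmul, h10]; exact (hI _).2 ⟨v 2, by module⟩
    · rw [lie_self]; exact I.zero_mem
    · rw [hsmul, hsmul', h12]; exact (hI _).2 ⟨-(v 0), by module⟩
    · rw [hsmul, h20]; exact (hI _).2 ⟨v 1, by module⟩
    · rw [hsmul, hsmul', h21]; exact (hI _).2 ⟨v 0, by module⟩
    · rw [lie_self]; exact I.zero_mem
  have bracketSS : ∀ x ∈ S, ∀ y ∈ S, ⁅x, y⁆ ∈ I := by
    intro x hx
    induction hx using Submodule.span_induction with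
    | mem a ha =>
      intro y hy
      induction hy using Submodule.span_induction with
      | mem b hb => exact genBrkt a ha b hb
      | zero => rw [lie_zero]; exact I.zero_mem
      | add b c _ _ hb hc => rw [lie_add]; exact I.add_mem hb hc
      | smul p b _ hb => rw [hsmul']; exact Ismul p hb
    | zero => intro y hy; rw [zero_lie]; exact I.zero_mem
    | add a b _ _ ha hb => intro y hy; rw [add_lie]; exact I.add_mem (ha y hy) (hb y hy)
    | smul p a _ ha => intro y hy; rw [hsmul]; exact Ismul p (ha y hy)
  -- quotient map facts
  have πsurj : ∀ z : O ⧸ I, ∃ a : O, LieSubmodule.Quotient.mk (N := I) a = z :=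
    fun z => LieSubmodule.Quotient.surjective_mk' (N := I) z
  have hD1 : ∀ z ∈ LieAlgebra.derivedSeries k (O ⧸ I) 1,
      ∃ a, a ∈ S ∧ LieSubmodule.Quotient.mk (N := I) a = z := by
    intro z hz
    have h1 : LieAlgebra.derivedSeries k (O ⧸ I) 1
        = ⁅(⊤ : LieIdeal k (O ⧸ I)), (⊤ : LieIdeal k (O ⧸ I))⁆ := by
      rw [LieAlgebra.derivedSeries_def, LieAlgebra.derivedSeriesOfIdeal_succ,
        LieAlgebra.derivedSeriesOfIdeal_zero]
    rw [h1, ← LieSubmodule.mem_toSubmodule, LieSubmodule.lieIdeal_oper_eq_linear_span'] at hz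
    induction hz using Submodule.span_induction with
    | mem m hm =>
      obtain ⟨x, -, n, -, rfl⟩ := hm
      obtain ⟨a, rfl⟩ := πsurj x
      obtain ⟨b, rfl⟩ := πsurj n
      exact ⟨⁅a, b⁆, bracketS a b, rfl⟩
    | zero => exact ⟨0, S.zero_mem, rfl⟩
    | add x y _ _ hx hy =>
      obtain ⟨a, ha, rfl⟩ := hx
      obtain ⟨b, hb, rfl⟩ := hy
      exact ⟨a + b, S.add_mem ha hb, rfl⟩
    | smul c x _ hx =>
      obtain ⟨a, ha, rfl⟩ := hx
      refine ⟨c • a, ?_, rfl⟩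
      rw [← algebraMap_smul (Polynomial k) c a]
      exact S.smul_mem _ ha
  have goal1 : LieAlgebra.derivedSeries k (O ⧸ I) 2 = ⊥ := by
    have h2 : LieAlgebra.derivedSeries k (O ⧸ I) 2
        = ⁅LieAlgebra.derivedSeries k (O ⧸ I) 1, LieAlgebra.derivedSeries k (O ⧸ I) 1⁆ := by
      rw [LieAlgebra.derivedSeries_def, LieAlgebra.derivedSeriesOfIdeal_succ]
    rw [h2, LieSubmodule.lie_eq_bot_iff]
    intro x hx y hy
    obtain ⟨a, haS, rfl⟩ := hD1 x hx
    obtain ⟨b, hbS, rfl⟩ := hD1 y hy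
    rw [← LieSubmodule.Quotient.mk_bracket, LieSubmodule.Quotient.mk_eq_zero']
    exact bracketSS a haS b hbS
  -- lower central series abbreviations
  have hlcs1 : LieModule.lowerCentralSeries k (O ⧸ I) (O ⧸ I) 1
      = ⁅(⊤ : LieIdeal k (O ⧸ I)), (⊤ : LieSubmodule k (O ⧸ I) (O ⧸ I))⁆ := by
    rw [LieModule.lowerCentralSeries_succ, LieModule.lowerCentralSeries_zero]
  have memlcs1 : ∀ a b : O, (LieSubmodule.Quotient.mk (N := I) ⁅a, b⁆)
      ∈ LieModule.lowerCentralSeries k (O ⧸ I) (O ⧸ I) 1 := by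
    intro a b
    rw [hlcs1, LieSubmodule.Quotient.mk_bracket]
    exact LieSubmodule.lie_mem_lie (LieSubmodule.mem_top _) (LieSubmodule.mem_top _)
  have memlcs2 : ∀ (a : O) (y : O ⧸ I),
      y ∈ LieModule.lowerCentralSeries k (O ⧸ I) (O ⧸ I) 1 →
      ⁅LieSubmodule.Quotient.mk (N := I) a, y⁆
        ∈ LieModule.lowerCentralSeries k (O ⧸ I) (O ⧸ I) 2 := by
    intro a y hy
    rw [show (2:ℕ) = 1 + 1 from rfl, LieModule.lowerCentralSeries_succ]
    exact LieSubmodule.lie_mem_lie (LieSubmodule.mem_top _) hy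
  have mkeq : ∀ x y : O, x - y ∈ I →
      (LieSubmodule.Quotient.mk (N := I) x : O ⧸ I) = LieSubmodule.Quotient.mk (N := I) y :=
    fun x y h => (Submodule.Quotient.eq I.toSubmodule).2 h
  have πadd : ∀ x y : O, (LieSubmodule.Quotient.mk (N := I) (x + y) : O ⧸ I)
      = LieSubmodule.Quotient.mk (N := I) x + LieSubmodule.Quotient.mk (N := I) y :=
    fun x y => rfl
  have πsub : ∀ x y : O, (LieSubmodule.Quotient.mk (N := I) (x - y) : O ⧸ I)
      = LieSubmodule.Quotient.mk (N := I) x - LieSubmodule.Quotient.mk (N := I) y :=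
    fun x y => rfl
  have πsmulk : ∀ (c : k) (x : O), (LieSubmodule.Quotient.mk (N := I) (c • x) : O ⧸ I)
      = c • LieSubmodule.Quotient.mk (N := I) x :=
    fun c x => rfl
  have hCsmul : ∀ (c : k) (w : O), (C c) • w = c • w := by
    intro c w
    rw [← Polynomial.algebraMap_eq]
    exact algebraMap_smul _ c w
  -- explicit bracket computations in O
  have e1 : ⁅(X : Polynomial k) • v 2, (X : Polynomial k) • v 0⁆
      = ((X : Polynomial k) ^ 3) • v 1 := by rw [hsmul, hsmul', h20]; module
  have e2 : ⁅(X : Polynomial k) • v 2, ((X : Polynomial k) ^ 3) • v 1⁆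
      = ((X : Polynomial k) ^ 4) • v 0 := by rw [hsmul, hsmul', h21]; module
  have e3 : ⁅(X : Polynomial k) • v 2, ((X : Polynomial k) ^ 4) • v 0⁆
      = ((X : Polynomial k) ^ 6) • v 1 := by rw [hsmul, hsmul', h20]; module
  have f1 : ⁅((X : Polynomial k) - 1) • v 1, ((X : Polynomial k) - 1) • v 2⁆
      = (-(((X : Polynomial k) - 1) ^ 2)) • v 0 := by rw [hsmul, hsmul', h12]; module
  have f2 : ⁅((X : Polynomial k) - 1) • v 1, (-(((X : Polynomial k) - 1) ^ 2)) • v 0⁆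
      = (-(((X : Polynomial k) - 1) ^ 4)) • v 2 := by rw [hsmul, hsmul', h10]; module
  have f3 : ⁅((X : Polynomial k) - 1) • v 1, (-(((X : Polynomial k) - 1) ^ 4)) • v 2⁆
      = (((X : Polynomial k) - 1) ^ 5) • v 0 := by rw [hsmul, hsmul', h12]; module
  -- members of the first lower central series step
  have mX3 : (LieSubmodule.Quotient.mk (N := I) (((X : Polynomial k) ^ 3) • v 1))
      ∈ LieModule.lowerCentralSeries k (O ⧸ I) (O ⧸ I) 1 := by
    rw [← e1]; exact memlcs1 _ _
  have mX4 : (LieSubmodule.Quotient.mk (N := I) (((X : Polynomial k) ^ 4) • v 0))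
      ∈ LieModule.lowerCentralSeries k (O ⧸ I) (O ⧸ I) 1 := by
    rw [← e2]; exact memlcs1 _ _
  have mf1 : (LieSubmodule.Quotient.mk (N := I) ((-(((X : Polynomial k) - 1) ^ 2)) • v 0))
      ∈ LieModule.lowerCentralSeries k (O ⧸ I) (O ⧸ I) 1 := by
    rw [← f1]; exact memlcs1 _ _
  have mf2 : (LieSubmodule.Quotient.mk (N := I) ((-(((X : Polynomial k) - 1) ^ 4)) • v 2))
      ∈ LieModule.lowerCentralSeries k (O ⧸ I) (O ⧸ I) 1 := by
    rw [← f2]; exact memlcs1 _ _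
  -- members of the second lower central series step
  have m_a0 : (LieSubmodule.Quotient.mk (N := I) ((X : Polynomial k) • v 0))
      ∈ LieModule.lowerCentralSeries k (O ⧸ I) (O ⧸ I) 2 := by
    have h := mkeq ((X : Polynomial k) • v 0) (((X : Polynomial k) ^ 4) • v 0)
      ((hI _).2 ⟨(-((X : Polynomial k) ^ 2 + X + 1)) • v 0, by module⟩)
    rw [h, ← e2, LieSubmodule.Quotient.mk_bracket]
    exact memlcs2 _ _ mX3
  have m_a1 : (LieSubmodule.Quotient.mk (N := I) ((X : Polynomial k) • v 1))
      ∈ LieModule.lowerCentralSeries k (O ⧸ I) (O ⧸ I) 2 := by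
    have h := mkeq ((X : Polynomial k) • v 1) (((X : Polynomial k) ^ 6) • v 1)
      ((hI _).2 ⟨(-((X : Polynomial k) ^ 4 + (X:Polynomial k) ^ 3 + (X:Polynomial k) ^ 2 + X + 1)) • v 1,
        by module⟩)
    rw [h, ← e3, LieSubmodule.Quotient.mk_bracket]
    exact memlcs2 _ _ mX4
  have m_b2 : (LieSubmodule.Quotient.mk (N := I) (((X : Polynomial k) - 1) • v 2))
      ∈ LieModule.lowerCentralSeries k (O ⧸ I) (O ⧸ I) 2 := by
    have h := mkeq (((X : Polynomial k) - 1) • v 2) ((-(((X : Polynomial k) - 1) ^ 4)) • v 2)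
      ((hI _).2 ⟨(((X : Polynomial k) ^ 2 - 3 * X + 3)) • v 2, by module⟩)
    rw [h, ← f2, LieSubmodule.Quotient.mk_bracket]
    exact memlcs2 _ _ mf1
  have m_b0 : (LieSubmodule.Quotient.mk (N := I) (((X : Polynomial k) - 1) • v 0))
      ∈ LieModule.lowerCentralSeries k (O ⧸ I) (O ⧸ I) 2 := by
    have h := mkeq (((X : Polynomial k) - 1) • v 0) ((((X : Polynomial k) - 1) ^ 5) • v 0)
      ((hI _).2 ⟨((2 - (X : Polynomial k)) * ((X : Polynomial k) ^ 2 - 2 * X + 2)) • v 0, by module⟩)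
    rw [h, ← f3, LieSubmodule.Quotient.mk_bracket]
    exact memlcs2 _ _ mf2
  have m_v0 : (LieSubmodule.Quotient.mk (N := I) (v 0))
      ∈ LieModule.lowerCentralSeries k (O ⧸ I) (O ⧸ I) 2 := by
    have hv0 : (v 0 : O) = (X : Polynomial k) • v 0 - ((X : Polynomial k) - 1) • v 0 := by module
    rw [hv0, πsub]
    exact sub_mem m_a0 m_b0
  -- every class of an element of S lies in the second lcs step
  have key2 : ∀ s ∈ S, ∀ p : Polynomial k,
      (LieSubmodule.Quotient.mk (N := I) (p • s))
        ∈ LieModule.lowerCentralSeries k (O ⧸ I) (O ⧸ I) 2 := by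
    intro s hs
    induction hs using Submodule.span_induction with
    | mem a ha =>
      intro p
      rcases ha with rfl | rfl | rfl
      · -- a = v 0
        obtain ⟨q, hq⟩ := aux_decomp0 p
        set c0 := p.eval 0 with hc0
        set c1 := p.eval 1 - p.eval 0 with hc1
        have hsplit : p • v 0 = ((X : Polynomial k) * ((X : Polynomial k) - 1)) • (q • v 0)
            + (C c0) • v 0 + (C c1) • ((X : Polynomial k) • v 0) := by
          rw [hq]; module
        rw [hsplit, πadd, πadd]
        refine add_mem (add_mem ?_ ?_) ?_
        · have hz : (LieSubmodule.Quotient.mk (N := I)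
              (((X : Polynomial k) * ((X : Polynomial k) - 1)) • (q • v 0)) : O ⧸ I) = 0 :=
            LieSubmodule.Quotient.mk_eq_zero'.2 ((hI _).2 ⟨q • v 0, rfl⟩)
          rw [hz]; exact zero_mem _
        · rw [hCsmul, πsmulk]
          exact SMulMemClass.smul_mem _ m_v0
        · rw [hCsmul, πsmulk]
          exact SMulMemClass.smul_mem _ m_a0
      · -- a = X • v 1
        obtain ⟨q, hq⟩ := aux_decomp1 p
        set c1 := p.eval 1 with hc1
        have hsplit : p • ((X : Polynomial k) • v 1)
            = ((X : Polynomial k) * ((X : Polynomial k) - 1)) • (q • v 1)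
            + (C c1) • ((X : Polynomial k) • v 1) := by
          rw [smul_smul, hq]; module
        rw [hsplit, πadd]
        refine add_mem ?_ ?_
        · have hz : (LieSubmodule.Quotient.mk (N := I)
              (((X : Polynomial k) * ((X : Polynomial k) - 1)) • (q • v 1)) : O ⧸ I) = 0 :=
            LieSubmodule.Quotient.mk_eq_zero'.2 ((hI _).2 ⟨q • v 1, rfl⟩)
          rw [hz]; exact zero_mem _
        · rw [hCsmul, πsmulk]
          exact SMulMemClass.smul_mem _ m_a1
      · -- a = (X - 1) • v 2
        obtain ⟨q, hq⟩ := aux_decomp2 p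
        set c0 := p.eval 0 with hc0
        have hsplit : p • (((X : Polynomial k) - 1) • v 2)
            = ((X : Polynomial k) * ((X : Polynomial k) - 1)) • (q • v 2)
            + (C c0) • (((X : Polynomial k) - 1) • v 2) := by
          rw [smul_smul, hq]; module
        rw [hsplit, πadd]
        refine add_mem ?_ ?_
        · have hz : (LieSubmodule.Quotient.mk (N := I)
              (((X : Polynomial k) * ((X : Polynomial k) - 1)) • (q • v 2)) : O ⧸ I) = 0 :=
            LieSubmodule.Quotient.mk_eq_zero'.2 ((hI _).2 ⟨q • v 2, rfl⟩)
          rw [hz]; exact zero_mem _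
        · rw [hCsmul, πsmulk]
          exact SMulMemClass.smul_mem _ m_b2
    | zero =>
      intro p
      rw [smul_zero]
      exact zero_mem _
    | add a b _ _ ha hb =>
      intro p
      rw [smul_add, πadd]
      exact add_mem (ha p) (hb p)
    | smul q a _ ha =>
      intro p
      rw [smul_smul]
      exact ha (p * q)
  -- goal 2
  have goal2 : LieModule.lowerCentralSeries k (O ⧸ I) (O ⧸ I) 2
      = LieModule.lowerCentralSeries k (O ⧸ I) (O ⧸ I) 1 := by
    refine le_antisymm
      (LieModule.antitone_lowerCentralSeries k (O ⧸ I) (O ⧸ I) (by norm_num)) ?_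
    rw [hlcs1, LieSubmodule.lie_le_iff]
    intro x _ m _
    obtain ⟨a, rfl⟩ := πsurj x
    obtain ⟨b, rfl⟩ := πsurj m
    rw [← LieSubmodule.Quotient.mk_bracket]
    have h := key2 _ (bracketS a b) 1
    rwa [one_smul] at h
  -- goal 3
  have goal3 : LieModule.lowerCentralSeries k (O ⧸ I) (O ⧸ I) 1 ≠ ⊥ := by
    intro hbot
    have hm : (LieSubmodule.Quotient.mk (N := I) ((X : Polynomial k) • v 1))
        ∈ LieModule.lowerCentralSeries k (O ⧸ I) (O ⧸ I) 1 := by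
      have h := mkeq ((X : Polynomial k) • v 1) (((X : Polynomial k) ^ 3) • v 1)
        ((hI _).2 ⟨(-((X : Polynomial k) + 1)) • v 1, by module⟩)
      rw [h]; exact mX3
    rw [hbot, LieSubmodule.mem_bot] at hm
    have hmem : ((X : Polynomial k) • v 1) ∈ I := LieSubmodule.Quotient.mk_eq_zero'.mp hm
    obtain ⟨y, hy⟩ := (hI _).1 hmem
    rw [← hbas 1] at hy
    have h5 := congrArg (fun z => bas.repr z 1) hy
    simp only [map_smul, Finsupp.smul_apply, Module.Basis.repr_self, Finsupp.single_eq_same,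
      smul_eq_mul, mul_one] at h5
    have h6 := congrArg (Polynomial.eval (1 : k)) h5
    simp at h6
  -- goal 4
  have goal4 : ¬ LieModule.IsNilpotent (O ⧸ I) (O ⧸ I) := by
    intro hn
    obtain ⟨n, hn⟩ := (LieModule.isNilpotent_iff k (O ⧸ I) (O ⧸ I)).mp hn
    have hstab : ∀ m : ℕ, LieModule.lowerCentralSeries k (O ⧸ I) (O ⧸ I) (m + 1)
        = LieModule.lowerCentralSeries k (O ⧸ I) (O ⧸ I) 1 := by
      intro m
      induction m with
      | zero => rfl
      | succ m ih =>
        have h1 := LieModule.lowerCentralSeries_succ (R := k) (L := O ⧸ I) (M := O ⧸ I) (k := m + 1)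
        have h2 := LieModule.lowerCentralSeries_succ (R := k) (L := O ⧸ I) (M := O ⧸ I) (k := 1)
        rw [h1, ih, ← h2, goal2]
    cases n with
    | zero =>
      apply goal3
      have hle : LieModule.lowerCentralSeries k (O ⧸ I) (O ⧸ I) 1
          ≤ LieModule.lowerCentralSeries k (O ⧸ I) (O ⧸ I) 0 :=
        LieModule.antitone_lowerCentralSeries k (O ⧸ I) (O ⧸ I) (by norm_num)
      rw [hn] at hle
      exact le_bot_iff.mp hle
    | succ m => exact goal3 ((hstab m) ▸ hn)
  exact ⟨goal1, goal2, goal3, goal4⟩
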